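/- Let f(z) = λz(1 + O(z)) be holomorphic near 0 with 0 < |λ| < 1, f injective on the closed disk of radius δ, |f(z)| < |z| on this closed disk minus the origin, and let 0 < r ≤ δ. Define h(c, z) : Δ × E → ℂ on E = S_r ∪ T_r, where S_r = {|z| = r} and T_r = {|z| = |λ|r}, by h(c, z) = z for z ∈ S_r and h(c, z) = (r/(cδ)) f(cδz/(rλ)) for z ∈ T_r, c ≠ 0 (extended by z at c = 0). Then h is a holomorphic motion of E parametrized by the unit disk Δ: h(0, z) = z, h(·, z) is holomorphic in c for each z ∈ E, and h(c, ·) is injective on E for each c ∈ Δ. -/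

import Mathlib

open Metric Complex

/-- A holomorphic motion of a set `E ⊆ ℂ` parametrized by the disk of radius `r`. -/
def IsHolomorphicMotion (r : ℝ) (E : Set ℂ) (h : ℂ → ℂ → ℂ) : Prop :=
  (∀ z ∈ E, h 0 z = z) ∧
  (∀ c ∈ ball (0:ℂ) r, Set.InjOn (h c) E) ∧
  (∀ z ∈ E, DifferentiableOn ℂ (fun c => h c z) (ball (0:ℂ) r))

theorem koenig_motion
    (f : ℂ → ℂ) (lam : ℂ) (δ r : ℝ)
    (hδ : 0 < δ) (hr : 0 < r) (hrδ : r ≤ δ)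
    (hf : DifferentiableOn ℂ f (closedBall (0:ℂ) δ))
    (hf0 : f 0 = 0) (hf' : deriv f 0 = lam)
    (hlam : 0 < ‖lam‖) (hlam1 : ‖lam‖ < 1)
    (hinj : Set.InjOn f (closedBall (0:ℂ) δ))
    (hcontr : ∀ z ∈ closedBall (0:ℂ) δ, z ≠ 0 → ‖f z‖ < ‖z‖)
    (h : ℂ → ℂ → ℂ)
    (hS : ∀ c ∈ ball (0:ℂ) 1, ∀ z ∈ sphere (0:ℂ) r, h c z = z)
    (hT : ∀ c ∈ ball (0:ℂ) 1, c ≠ 0 → ∀ z ∈ sphere (0:ℂ) (‖lam‖ * r),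
      h c z = ((r : ℂ) / (c * (δ : ℂ))) * f (c * (δ : ℂ) * z / ((r : ℂ) * lam)))
    (hT0 : ∀ z ∈ sphere (0:ℂ) (‖lam‖ * r), h 0 z = z) :
    IsHolomorphicMotion 1 (sphere (0:ℂ) r ∪ sphere (0:ℂ) (‖lam‖ * r)) h := by
  have h01 : (0:ℂ) ∈ ball (0:ℂ) 1 := by simp
  have hrne : (r:ℂ) ≠ 0 := Complex.ofReal_ne_zero.mpr hr.ne'
  have hδne : (δ:ℂ) ≠ 0 := Complex.ofReal_ne_zero.mpr hδ.ne'
  have hlne : lam ≠ 0 := norm_pos_iff.mp hlam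
  have hwnorm : ∀ c z : ℂ, ‖z‖ = ‖lam‖ * r →
      ‖c * (δ:ℂ) * z / ((r:ℂ) * lam)‖ = ‖c‖ * δ := by
    intro c z hz
    simp only [norm_div, norm_mul, hz, Complex.norm_real,
      Real.norm_of_nonneg hδ.le, Real.norm_of_nonneg hr.le]
    rw [mul_comm r ‖lam‖, mul_div_assoc, div_self (by positivity), mul_one]
  refine ⟨?_, ?_, ?_⟩
  · rintro z (hz | hz)
    · exact hS 0 h01 z hz
    · exact hT0 z hz
  · intro c hc
    rcases eq_or_ne c 0 with rfl | hc0
    · intro z₁ h₁ z₂ h₂ he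
      have e1 : h 0 z₁ = z₁ := by rcases h₁ with h₁ | h₁
                                  exacts [hS 0 h01 z₁ h₁, hT0 z₁ h₁]
      have e2 : h 0 z₂ = z₂ := by rcases h₂ with h₂ | h₂
                                  exacts [hS 0 h01 z₂ h₂, hT0 z₂ h₂]
      rwa [e1, e2] at he
    · have hcpos : 0 < ‖c‖ := norm_pos_iff.mpr hc0
      have hc1 : ‖c‖ < 1 := by simpa using hc
      have hwball : ∀ z : ℂ, ‖z‖ = ‖lam‖ * r →
          c * (δ:ℂ) * z / ((r:ℂ) * lam) ∈ closedBall (0:ℂ) δ := by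
        intro z hz
        rw [mem_closedBall_zero_iff, hwnorm c z hz]
        nlinarith
      have key : ∀ z ∈ sphere (0:ℂ) (‖lam‖ * r), ‖h c z‖ < r := by
        intro z hzmem
        have hz : ‖z‖ = ‖lam‖ * r := mem_sphere_zero_iff_norm.mp hzmem
        have hz0 : z ≠ 0 := by
          intro h0; rw [h0, norm_zero] at hz; nlinarith
        set w := c * (δ:ℂ) * z / ((r:ℂ) * lam) with hw
        have hw0 : w ≠ 0 :=
          div_ne_zero (mul_ne_zero (mul_ne_zero hc0 hδne) hz0) (mul_ne_zero hrne hlne)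
        have hfw : ‖f w‖ < ‖w‖ := hcontr w (hwball z hz) hw0
        rw [hwnorm c z hz] at hfw
        rw [hT c hc hc0 z hzmem, norm_mul, norm_div, norm_mul, Complex.norm_real,
          Complex.norm_real, Real.norm_of_nonneg hr.le, Real.norm_of_nonneg hδ.le]
        rw [div_mul_eq_mul_div, div_lt_iff₀ (by positivity)]
        nlinarith
      intro z₁ h₁ z₂ h₂ he
      rcases h₁ with h₁ | h₁ <;> rcases h₂ with h₂ | h₂
      · rwa [hS c hc z₁ h₁, hS c hc z₂ h₂] at he
      · exfalso
        have := key z₂ h₂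
        rw [← he, hS c hc z₁ h₁, mem_sphere_zero_iff_norm.mp h₁] at this
        exact lt_irrefl r this
      · exfalso
        have := key z₁ h₁
        rw [he, hS c hc z₂ h₂, mem_sphere_zero_iff_norm.mp h₂] at this
        exact lt_irrefl r this
      · rw [hT c hc hc0 z₁ h₁, hT c hc hc0 z₂ h₂] at he
        have hne : (r:ℂ) / (c * (δ:ℂ)) ≠ 0 := div_ne_zero hrne (mul_ne_zero hc0 hδne)
        have hfw : f (c * (δ:ℂ) * z₁ / ((r:ℂ) * lam)) = f (c * (δ:ℂ) * z₂ / ((r:ℂ) * lam)) :=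
          mul_left_cancel₀ hne he
        have hw : c * (δ:ℂ) * z₁ / ((r:ℂ) * lam) = c * (δ:ℂ) * z₂ / ((r:ℂ) * lam) :=
          hinj (hwball z₁ (mem_sphere_zero_iff_norm.mp h₁))
            (hwball z₂ (mem_sphere_zero_iff_norm.mp h₂)) hfw
        rw [div_eq_div_iff (mul_ne_zero hrne hlne) (mul_ne_zero hrne hlne)] at hw
        have hw2 : c * (δ:ℂ) * z₁ = c * (δ:ℂ) * z₂ :=
          mul_right_cancel₀ (mul_ne_zero hrne hlne) hw
        exact mul_left_cancel₀ (mul_ne_zero hc0 hδne) hw2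
  · rintro z (hz | hz)
    · exact (differentiableOn_const z).congr fun c hc => hS c hc z hz
    · have hznorm : ‖z‖ = ‖lam‖ * r := mem_sphere_zero_iff_norm.mp hz
      set F : ℂ → ℂ := fun c => f (c * (δ:ℂ) * z / ((r:ℂ) * lam)) with hF
      have hFd : DifferentiableOn ℂ F (ball (0:ℂ) 1) := by
        apply hf.comp
        · exact (((differentiable_id.mul_const _).mul_const _).div_const _).differentiableOn
        · intro c hc
          rw [mem_closedBall_zero_iff, hwnorm c z hznorm]
          have hc1 : ‖c‖ < 1 := by simpa using hc
          nlinarith [norm_nonneg c]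
      have hD : DifferentiableOn ℂ (fun c => ((r:ℂ)/(δ:ℂ)) * dslope F 0 c) (ball (0:ℂ) 1) :=
        ((Complex.differentiableOn_dslope (ball_mem_nhds _ one_pos)).mpr hFd).const_mul _
      apply hD.congr
      intro c hc
      rcases eq_or_ne c 0 with rfl | hc0
      · have hderiv : HasDerivAt F (lam * ((δ:ℂ) * z / ((r:ℂ) * lam))) 0 := by
          have hfd0 : HasDerivAt f lam 0 := by
            have hd : DifferentiableAt ℂ f 0 :=
              hf.differentiableAt (closedBall_mem_nhds (0:ℂ) hδ)
            simpa [hf'] using hd.hasDerivAt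
          have hL : HasDerivAt (fun c : ℂ => c * ((δ:ℂ) * z / ((r:ℂ) * lam)))
              ((δ:ℂ) * z / ((r:ℂ) * lam)) 0 := hasDerivAt_mul_const _
          have hfd0' : HasDerivAt f lam ((fun c : ℂ => c * ((δ:ℂ) * z / ((r:ℂ) * lam))) 0) := by
            simpa using hfd0
          have := hfd0'.comp 0 hL
          simpa [hF, Function.comp_def, mul_assoc, mul_div_assoc] using this
        rw [hT0 z hz, dslope_same, hderiv.deriv]
        field_simp
      · rw [hT c hc hc0 z hz, dslope_of_ne _ hc0, slope_def_field]
        have hF0 : F 0 = 0 := by simp [hF, hf0]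
        rw [hF0, sub_zero, sub_zero]
        field_simp [hc0, hδne]
        rfl
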